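/- Let 1 ≤ t < r be integers with t > r/2 and with r−t dividing r, and let P = P_{n,t}^{(r)} be the r-uniform t-tight path of length ℓ, where ℓ > 2 and ℓ ≥ 2r/(r−t) − 1. Then χ^e(P) = 2. -/

import Mathlib

open Finset

open Classical in
/-- `σ^e(v) = Σ_{e ∋ v} w(e)` for a hypergraph with edge set `E`. -/
noncomputable def sigmaE {V : Type*} [Fintype V] (E : Finset (Finset V))
    (w : Finset V → ℕ) (v : V) : ℕ :=
  ∑ e ∈ E.filter (fun e => v ∈ e), w e

/-- The hypergraph with edge set `E` admits an edge weighting with weights in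
`{1,…,k}` such that `σ^e` is a proper vertex coloring: every edge with at least
two vertices contains two vertices with distinct colors. -/
def HasNSDEdgeWeighting {V : Type*} [Fintype V] (E : Finset (Finset V)) (k : ℕ) : Prop :=
  ∃ w : Finset V → ℕ, (∀ e ∈ E, 1 ≤ w e ∧ w e ≤ k) ∧
    ∀ e ∈ E, 2 ≤ e.card → ∃ u ∈ e, ∃ v ∈ e, sigmaE E w u ≠ sigmaE E w v

/-- The edge set of the `r`-uniform `t`-tight path of length `ℓ`, on vertex set
`Fin (ℓ*(r-t)+t)`: the `i`-th edge (`i : Fin ℓ`) consists of the `r` consecutive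
vertices starting at position `i*(r-t)` (0-indexed). -/
def tightPathEdges (r t ℓ : ℕ) : Finset (Finset (Fin (ℓ * (r - t) + t))) :=
  (Finset.univ : Finset (Fin ℓ)).image (fun i : Fin ℓ =>
    Finset.univ.filter (fun v : Fin (ℓ * (r - t) + t) =>
      (i : ℕ) * (r - t) ≤ (v : ℕ) ∧ (v : ℕ) < (i : ℕ) * (r - t) + r))

namespace ChiEAux

/-- The `i`-th edge of the tight path. -/
def edge (r t ℓ : ℕ) (i : Fin ℓ) : Finset (Fin (ℓ * (r - t) + t)) :=
  Finset.univ.filter (fun v : Fin (ℓ * (r - t) + t) =>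
    (i : ℕ) * (r - t) ≤ (v : ℕ) ∧ (v : ℕ) < (i : ℕ) * (r - t) + r)

lemma tightPathEdges_eq (r t ℓ : ℕ) :
    tightPathEdges r t ℓ = Finset.univ.image (edge r t ℓ) := rfl

lemma mem_edge {r t ℓ : ℕ} {i : Fin ℓ} {v : Fin (ℓ * (r - t) + t)} :
    v ∈ edge r t ℓ i ↔ (i : ℕ) * (r - t) ≤ (v : ℕ) ∧ (v : ℕ) < (i : ℕ) * (r - t) + r := by
  simp [edge]

lemma start_lt {r t ℓ : ℕ} (hs : 0 < r - t) (i : Fin ℓ) :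
    (i : ℕ) * (r - t) < ℓ * (r - t) + t :=
  lt_of_lt_of_le ((Nat.mul_lt_mul_right hs).mpr i.isLt) (Nat.le_add_right _ _)

lemma start_mem {r t ℓ : ℕ} (hs : 0 < r - t) (htr : t < r) (i : Fin ℓ) :
    (⟨(i : ℕ) * (r - t), start_lt hs i⟩ : Fin (ℓ * (r - t) + t)) ∈ edge r t ℓ i := by
  rw [mem_edge]
  exact ⟨le_rfl, by simp; omega⟩

lemma edge_injOn {r t ℓ : ℕ} (hs : 0 < r - t) (htr : t < r) :
    ∀ i : Fin ℓ, ∀ j : Fin ℓ, edge r t ℓ i = edge r t ℓ j → i = j := by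
  intro i j h
  have h1 := start_mem hs htr i
  have h2 := start_mem hs htr j
  rw [h, mem_edge] at h1
  rw [← h, mem_edge] at h2
  have : (i : ℕ) * (r - t) = (j : ℕ) * (r - t) := le_antisymm h2.1 h1.1
  exact Fin.ext (Nat.eq_of_mul_eq_mul_right hs this)

/-- The key σ computation: if the weight of edge `i` is `W i`, then
`σ(v) = ∑_{k ∈ [j+1-m, min (j+1) ℓ)} W k` where `j = v / (r-t)`. -/
lemma sigma_eq {r t ℓ m : ℕ} (hs : 0 < r - t) (htr : t < r) (hr : r = m * (r - t))
    (W : ℕ → ℕ) (w : Finset (Fin (ℓ * (r - t) + t)) → ℕ)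
    (hw : ∀ i : Fin ℓ, w (edge r t ℓ i) = W (i : ℕ))
    (v : Fin (ℓ * (r - t) + t)) :
    sigmaE (tightPathEdges r t ℓ) w v =
      ∑ k ∈ Finset.Ico ((v : ℕ) / (r - t) + 1 - m) (min ((v : ℕ) / (r - t) + 1) ℓ), W k := by
  classical
  unfold sigmaE
  have key : (tightPathEdges r t ℓ).filter (fun e => v ∈ e)
      = (Finset.univ.filter (fun i : Fin ℓ => v ∈ edge r t ℓ i)).image (edge r t ℓ) := by
    ext e
    simp only [tightPathEdges_eq, Finset.mem_filter, Finset.mem_image, Finset.mem_univ, true_and]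
    constructor
    · rintro ⟨⟨i, rfl⟩, hv⟩
      exact ⟨i, hv, rfl⟩
    · rintro ⟨i, hv, rfl⟩
      exact ⟨⟨i, rfl⟩, hv⟩
  rw [Finset.filter_congr_decidable] at key ⊢
  rw [key, Finset.sum_image (fun x _ y _ h => edge_injOn hs htr x y h)]
  have step1 : ∑ i ∈ Finset.univ.filter (fun i : Fin ℓ => v ∈ edge r t ℓ i), w (edge r t ℓ i)
      = ∑ i : Fin ℓ, (if (i : ℕ) * (r - t) ≤ (v : ℕ) ∧ (v : ℕ) < (i : ℕ) * (r - t) + r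
          then W (i : ℕ) else 0) := by
    rw [Finset.sum_filter]
    refine Finset.sum_congr rfl (fun i _ => ?_)
    by_cases hc : v ∈ edge r t ℓ i
    · rw [if_pos hc, if_pos (mem_edge.mp hc), hw]
    · rw [if_neg hc, if_neg (fun hh => hc (mem_edge.mpr hh))]
  rw [step1]
  rw [Fin.sum_univ_eq_sum_range (fun k => if k * (r - t) ≤ (v : ℕ) ∧ (v : ℕ) < k * (r - t) + r
        then W k else 0) ℓ]
  rw [← Finset.sum_filter]
  refine Finset.sum_congr ?_ (fun _ _ => rfl)
  ext k
  simp only [Finset.mem_filter, Finset.mem_range, Finset.mem_Ico, lt_min_iff]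
  have h1 : k * (r - t) ≤ (v : ℕ) ↔ k ≤ (v : ℕ) / (r - t) :=
    (Nat.le_div_iff_mul_le hs).symm
  have h2 : (v : ℕ) < k * (r - t) + r ↔ (v : ℕ) / (r - t) < k + m := by
    rw [show k * (r - t) + r = (k + m) * (r - t) by rw [Nat.add_mul]; omega]
    exact (Nat.div_lt_iff_lt_mul hs).symm
  constructor
  · rintro ⟨hk, hle, hlt⟩
    rw [h1] at hle
    rw [h2] at hlt
    exact ⟨by omega, by omega, hk⟩
  · rintro ⟨hge, hlt, hk⟩
    refine ⟨hk, h1.mpr (by omega), h2.mpr (by omega)⟩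

/-- The weight pattern: `1 + ((k/m) % 2)`. -/
def W (m k : ℕ) : ℕ := 1 + (k / m) % 2

lemma W_one_le (m k : ℕ) : 1 ≤ W m k := Nat.le_add_right 1 _

lemma W_le_two (m k : ℕ) : W m k ≤ 2 := by
  have : k / m % 2 < 2 := Nat.mod_lt _ (by norm_num)
  unfold W; omega

lemma W_flip (m k : ℕ) (hm : 0 < m) : W m (k + m) ≠ W m k := by
  unfold W
  rw [Nat.add_div_right k hm]
  omega

open Classical in
noncomputable def wfun (r t ℓ m : ℕ) : Finset (Fin (ℓ * (r - t) + t)) → ℕ :=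
  fun e => if h : ∃ i : Fin ℓ, edge r t ℓ i = e then W m (h.choose : ℕ) else 1

lemma wfun_edge {r t ℓ : ℕ} (m : ℕ) (hs : 0 < r - t) (htr : t < r) (i : Fin ℓ) :
    wfun r t ℓ m (edge r t ℓ i) = W m (i : ℕ) := by
  unfold wfun
  have h : ∃ j : Fin ℓ, edge r t ℓ j = edge r t ℓ i := ⟨i, rfl⟩
  rw [dif_pos h]
  have : h.choose = i := edge_injOn hs htr _ _ h.choose_spec
  rw [this]

lemma wfun_bounds (r t ℓ m : ℕ) (e : Finset (Fin (ℓ * (r - t) + t))) :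
    1 ≤ wfun r t ℓ m e ∧ wfun r t ℓ m e ≤ 2 := by
  unfold wfun
  split
  · exact ⟨W_one_le _ _, W_le_two _ _⟩
  · exact ⟨le_rfl, one_le_two⟩

lemma edge_mem (r t ℓ : ℕ) (i : Fin ℓ) : edge r t ℓ i ∈ tightPathEdges r t ℓ := by
  rw [tightPathEdges_eq]
  exact Finset.mem_image_of_mem _ (Finset.mem_univ i)

lemma upper {r t ℓ m : ℕ} (hs : 0 < r - t) (htr : t < r) (hr : r = m * (r - t))
    (hm : 3 ≤ m) (hlm : 2 * m - 1 ≤ ℓ) :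
    HasNSDEdgeWeighting (tightPathEdges r t ℓ) 2 := by
  have h3s : 3 * (r - t) ≤ m * (r - t) := Nat.mul_le_mul_right _ hm
  refine ⟨wfun r t ℓ m, fun e _ => wfun_bounds r t ℓ m e, ?_⟩
  intro e he _
  rw [tightPathEdges_eq] at he
  obtain ⟨i, -, rfl⟩ := Finset.mem_image.mp he
  set j := (i : ℕ) with hjdef
  have hj : j < ℓ := i.isLt
  have hmul : (j + 1) * (r - t) = j * (r - t) + (r - t) := by ring
  have hvlt : (j + 1) * (r - t) < ℓ * (r - t) + t := by
    have h1 : (j + 1) * (r - t) ≤ ℓ * (r - t) := Nat.mul_le_mul_right _ (by omega)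
    omega
  set u : Fin (ℓ * (r - t) + t) := ⟨j * (r - t), start_lt hs i⟩ with hudef
  set v : Fin (ℓ * (r - t) + t) := ⟨(j + 1) * (r - t), hvlt⟩ with hvdef
  have hu : u ∈ edge r t ℓ i := by
    rw [mem_edge]
    refine ⟨le_rfl, ?_⟩
    show j * (r - t) < j * (r - t) + r
    omega
  have hv : v ∈ edge r t ℓ i := by
    rw [mem_edge]
    constructor
    · show j * (r - t) ≤ (j + 1) * (r - t)
      omega
    · show (j + 1) * (r - t) < j * (r - t) + r
      omega
  refine ⟨u, hu, v, hv, ?_⟩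
  have su := sigma_eq hs htr hr (W m) (wfun r t ℓ m) (fun k => wfun_edge m hs htr k) u
  have sv := sigma_eq hs htr hr (W m) (wfun r t ℓ m) (fun k => wfun_edge m hs htr k) v
  have hdu : ((u : ℕ)) / (r - t) = j := by
    rw [show ((u : ℕ)) = j * (r - t) from rfl]
    exact Nat.mul_div_cancel j hs
  have hdv : ((v : ℕ)) / (r - t) = j + 1 := by
    rw [show ((v : ℕ)) = (j + 1) * (r - t) from rfl]
    exact Nat.mul_div_cancel (j + 1) hs
  rw [su, sv, hdu, hdv]
  by_cases hc1 : j + 2 ≤ m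
  · -- left boundary: windows [0, j+1) and [0, j+2)
    rw [show j + 1 - m = 0 by omega, show j + 2 - m = 0 by omega,
      show min (j + 1) ℓ = j + 1 by omega, show min (j + 2) ℓ = j + 2 by omega]
    have h5 : ∑ k ∈ Finset.Ico 0 (j + 2), W m k
        = ∑ k ∈ Finset.Ico 0 (j + 1), W m k + W m (j + 1) := by
      rw [show j + 2 = j + 1 + 1 by omega]
      exact Finset.sum_Ico_succ_top (Nat.zero_le _) _
    have h6 := W_one_le m (j + 1)
    omega
  · obtain ⟨a, ha⟩ : ∃ a, j + 1 = a + m := ⟨j + 1 - m, by omega⟩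
    rw [show j + 1 - m = a by omega, show j + 2 - m = a + 1 by omega,
      show min (j + 1) ℓ = j + 1 by omega]
    have hflip : W m (j + 1) ≠ W m a := by
      have h := W_flip m a (by omega)
      rw [show a + m = j + 1 by omega] at h
      exact h
    by_cases hc2 : j + 2 ≤ ℓ
    · -- middle: windows [a, j+1) and [a+1, j+2)
      rw [show min (j + 2) ℓ = j + 2 by omega]
      have htop : ∑ k ∈ Finset.Ico a (j + 2), W m k
          = ∑ k ∈ Finset.Ico a (j + 1), W m k + W m (j + 1) := by
        rw [show j + 2 = j + 1 + 1 by omega]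
        exact Finset.sum_Ico_succ_top (by omega) _
      have hbot : ∑ k ∈ Finset.Ico a (j + 2), W m k
          = W m a + ∑ k ∈ Finset.Ico (a + 1) (j + 2), W m k :=
        Finset.sum_eq_sum_Ico_succ_bot (by omega) _
      omega
    · -- right boundary: j = ℓ - 1
      rw [show min (j + 2) ℓ = j + 1 by omega]
      have hbot : ∑ k ∈ Finset.Ico a (j + 1), W m k
          = W m a + ∑ k ∈ Finset.Ico (a + 1) (j + 1), W m k :=
        Finset.sum_eq_sum_Ico_succ_bot (by omega) _
      have h6 := W_one_le m a
      omega

lemma lower {r t ℓ m : ℕ} (hs : 0 < r - t) (htr : t < r) (hr : r = m * (r - t))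
    (hm : 3 ≤ m) (hlm : 2 * m - 1 ≤ ℓ) :
    ¬ HasNSDEdgeWeighting (tightPathEdges r t ℓ) 1 := by
  have h3s : 3 * (r - t) ≤ m * (r - t) := Nat.mul_le_mul_right _ hm
  rintro ⟨w, hb, hp⟩
  have hw1 : ∀ i : Fin ℓ, w (edge r t ℓ i) = (fun _ : ℕ => 1) (i : ℕ) := by
    intro i
    have := hb _ (edge_mem r t ℓ i)
    simp only []
    omega
  have hℓm : m - 1 < ℓ := by omega
  set i0 : Fin ℓ := ⟨m - 1, hℓm⟩ with hi0
  have hkey : ∀ x ∈ edge r t ℓ i0, sigmaE (tightPathEdges r t ℓ) w x = m := by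
    intro x hx
    rw [mem_edge] at hx
    have hx1 : (m - 1) * (r - t) ≤ (x : ℕ) := hx.1
    have hx2 : (x : ℕ) < (m - 1) * (r - t) + r := hx.2
    have hjlo : m - 1 ≤ (x : ℕ) / (r - t) := (Nat.le_div_iff_mul_le hs).mpr hx1
    have hjhi : (x : ℕ) / (r - t) < 2 * m - 1 := by
      rw [Nat.div_lt_iff_lt_mul hs]
      have : (2 * m - 1) * (r - t) = (m - 1) * (r - t) + m * (r - t) := by
        rw [← Nat.add_mul]
        congr 1
        omega
      omega
    rw [sigma_eq hs htr hr (fun _ => 1) w hw1 x]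
    rw [Finset.sum_const, smul_eq_mul, mul_one, Nat.card_Ico]
    omega
  have hcard : 2 ≤ (edge r t ℓ i0).card := by
    have h1 := start_mem hs htr i0
    have hlt2 : (m - 1) * (r - t) + 1 < ℓ * (r - t) + t := by
      have h5 : (m - 1) * (r - t) < ℓ * (r - t) :=
        (Nat.mul_lt_mul_right hs).mpr (by omega)
      omega
    have h2 : (⟨(m - 1) * (r - t) + 1, hlt2⟩ : Fin (ℓ * (r - t) + t)) ∈ edge r t ℓ i0 := by
      rw [mem_edge]
      constructor
      · show (m - 1) * (r - t) ≤ (m - 1) * (r - t) + 1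
        omega
      · show (m - 1) * (r - t) + 1 < (m - 1) * (r - t) + r
        omega
    refine Finset.one_lt_card.mpr ⟨_, h1, _, h2, ?_⟩
    simp only [ne_eq, Fin.mk.injEq]
    show ¬ (m - 1) * (r - t) = (m - 1) * (r - t) + 1
    omega
  obtain ⟨u, hu, v, hv, hne⟩ := hp _ (edge_mem r t ℓ i0) hcard
  exact hne (by rw [hkey u hu, hkey v hv])

end ChiEAux

/-- For `1 ≤ t < r` with `t > r/2` and `r-t` dividing `r`, and the `r`-uniform
`t`-tight path `P` of length `ℓ`, where `ℓ > 2` and `ℓ ≥ 2r/(r-t) - 1`,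
`χ^e(P) = 2`. -/
theorem chiE_tightPath_two (r t ℓ : ℕ) (ht : 1 ≤ t) (htr : t < r) (h2t : r < 2 * t)
    (hdvd : (r - t) ∣ r) (hl : 2 < ℓ) (hl' : 2 * (r / (r - t)) - 1 ≤ ℓ) :
    IsLeast {k : ℕ | 0 < k ∧ HasNSDEdgeWeighting (tightPathEdges r t ℓ) k} 2 := by
  have hs : 0 < r - t := by omega
  set m := r / (r - t) with hmdef
  have hr : r = m * (r - t) := (Nat.div_mul_cancel hdvd).symm
  have hm : 3 ≤ m := by
    by_contra hcon
    push_neg at hcon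
    have h1 : m * (r - t) ≤ 2 * (r - t) := Nat.mul_le_mul_right _ (by omega)
    omega
  constructor
  · exact ⟨by norm_num, ChiEAux.upper hs htr hr hm hl'⟩
  · rintro k ⟨hk, hkw⟩
    by_contra hcon
    push_neg at hcon
    have hk1 : k = 1 := by omega
    subst hk1
    exact ChiEAux.lower hs htr hr hm hl' hkw
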